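/- arXiv:chao-dyn/9506014 — 3 statements merged into one kernel-verified Lean document; each statement's English description precedes it below -/
import Mathlib

section
/- Let (ζ_n)_{n≥0} be a sequence of complex numbers with |ζ_n| < exp(a + bn) for some a ∈ ℝ and b > 0. Then for any ε > 0, the series s(z) = ∑_{n=0}^∞ ζ_n · exp((z−n)(2π+b+ε)) · sin(2π(z−n))/(2π(z−n)) converges uniformly on every disk {|z| < ρ}, and s is an entire function on ℂ. -/
open Complex Real Filter Nat

/-- The interpolation kernel `f_n` with the removable singularity at `z = n` filled in by 1. -/
noncomputable def fTerm (b ε : ℝ) (n : ℕ) (z : ℂ) : ℂ :=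
  if z = (n : ℂ) then 1 else
    Complex.exp ((z - n) * (2 * Real.pi + b + ε)) *
      Complex.sin (2 * Real.pi * (z - n)) / (2 * Real.pi * (z - n))

lemma norm_sin_le_aux (w : ℂ) : ‖Complex.sin w‖ ≤ ‖w‖ * Real.exp ‖w‖ := by
  have h1 : ‖Complex.sin w‖ ≤ ‖w‖ * Real.cosh ‖w‖ := by
    rw [Complex.sin_eq_tsum]
    refine tsum_of_norm_bounded ((Real.hasSum_cosh ‖w‖).mul_left ‖w‖) fun n => ?_
    have h2 : ‖(-1 : ℂ) ^ n * w ^ (2 * n + 1) / ((2 * n + 1)! : ℂ)‖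
        = ‖w‖ ^ (2 * n + 1) / ((2 * n + 1)! : ℝ) := by
      rw [norm_div, norm_mul, norm_pow, norm_pow]
      simp
    rw [h2, pow_succ, mul_comm (‖w‖ ^ (2 * n)) ‖w‖, mul_div_assoc]
    refine mul_le_mul_of_nonneg_left ?_ (norm_nonneg w)
    refine div_le_div_of_nonneg_left (by positivity) (by positivity) ?_
    exact Nat.cast_le.2 (Nat.factorial_le (by omega))
  refine h1.trans ?_
  have hc : Real.cosh ‖w‖ ≤ Real.exp ‖w‖ := by
    rw [Real.cosh_eq]
    have : Real.exp (-‖w‖) ≤ Real.exp ‖w‖ := by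
      apply Real.exp_le_exp.2; simp [neg_le_self (norm_nonneg w)]
    linarith
  exact mul_le_mul_of_nonneg_left hc (norm_nonneg w)

lemma norm_dslope_sin_le (w : ℂ) : ‖dslope Complex.sin 0 w‖ ≤ Real.exp ‖w‖ := by
  rcases eq_or_ne w 0 with h | h
  · simp [h, dslope_same, Complex.deriv_sin]
  · rw [dslope_of_ne _ h, slope_def_field, Complex.sin_zero, sub_zero, sub_zero]
    rw [norm_div]
    rw [div_le_iff₀ (by simpa using h)]
    simpa [mul_comm] using norm_sin_le_aux w

lemma differentiable_dslope_sin : Differentiable ℂ (dslope Complex.sin 0) := by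
  intro w
  rcases eq_or_ne w 0 with h | h
  · subst h
    obtain ⟨p, hp⟩ := (Complex.differentiable_sin.analyticAt (0 : ℂ))
    exact hp.has_fpower_series_dslope_fslope.differentiableAt
  · exact (differentiableAt_dslope_of_ne h).2 (Complex.differentiable_sin w)

lemma fTerm_eq (b ε : ℝ) (n : ℕ) :
    fTerm b ε n = fun z =>
      Complex.exp ((z - n) * (2 * Real.pi + b + ε)) *
        dslope Complex.sin 0 (2 * Real.pi * (z - n)) := by
  funext z
  rcases eq_or_ne z (n : ℂ) with h | h
  · simp [fTerm, h, dslope_same, Complex.deriv_sin]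
  · have hw : (2 * (Real.pi : ℂ) * (z - n)) ≠ 0 := by
      have : (Real.pi : ℂ) ≠ 0 := by exact_mod_cast Real.pi_ne_zero
      simp [sub_ne_zero.2 h, this]
    rw [fTerm, if_neg h, dslope_of_ne _ hw, slope_def_field, Complex.sin_zero, sub_zero,
      sub_zero, mul_div_assoc]

lemma fTerm_differentiable (b ε : ℝ) (n : ℕ) : Differentiable ℂ (fTerm b ε n) := by
  rw [fTerm_eq]
  refine Differentiable.mul ?_ ?_
  · exact Complex.differentiable_exp.comp ((differentiable_id.sub_const _).mul_const _)
  · exact differentiable_dslope_sin.comp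
      ((differentiable_const _).mul (differentiable_id.sub_const _))

lemma fTerm_bound (b ε : ℝ) (hb : 0 < b) (hε : 0 < ε) (n : ℕ) (z : ℂ) (ρ : ℝ) (hz : ‖z‖ ≤ ρ) :
    ‖fTerm b ε n z‖ ≤ Real.exp (ρ * (4 * Real.pi + b + ε)) * Real.exp (-(b + ε) * n) := by
  rw [fTerm_eq]
  have hre : ((z - n) * (2 * (Real.pi : ℂ) + b + ε)).re = (z.re - n) * (2 * Real.pi + b + ε) := by
    have : (2 * (Real.pi : ℂ) + b + ε) = ((2 * Real.pi + b + ε : ℝ) : ℂ) := by push_cast; ring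
    rw [this, Complex.mul_re]
    simp
  have hπ : (0 : ℝ) < Real.pi := Real.pi_pos
  have hzre : z.re - n ≤ ρ - n := by
    have := Complex.abs_re_le_norm z
    have : z.re ≤ ‖z‖ := (le_abs_self _).trans this
    linarith
  have hnorm : ‖(2 * (Real.pi : ℂ) * (z - n))‖ ≤ 2 * Real.pi * (ρ + n) := by
    rw [norm_mul]
    have h1 : ‖(2 * (Real.pi : ℂ))‖ = 2 * Real.pi := by
      rw [show (2 * (Real.pi : ℂ)) = ((2 * Real.pi : ℝ) : ℂ) by push_cast; ring,
        Complex.norm_real, Real.norm_eq_abs, abs_of_pos (by linarith)]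
    have h2 : ‖z - (n : ℂ)‖ ≤ ρ + n := by
      refine (norm_sub_le _ _).trans ?_
      have hn : ‖(n : ℂ)‖ = n := by simp
      rw [hn]; linarith
    rw [h1]
    exact mul_le_mul_of_nonneg_left h2 (by linarith)
  beta_reduce
  calc ‖Complex.exp ((z - n) * (2 * Real.pi + b + ε)) *
          dslope Complex.sin 0 (2 * Real.pi * (z - n))‖
      = Real.exp (((z - n) * (2 * (Real.pi:ℂ) + b + ε)).re) *
          ‖dslope Complex.sin 0 (2 * Real.pi * (z - n))‖ := by
        rw [norm_mul, Complex.norm_exp]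
    _ ≤ Real.exp ((ρ - n) * (2 * Real.pi + b + ε)) *
          Real.exp (2 * Real.pi * (ρ + n)) := by
        refine mul_le_mul ?_ ?_ (norm_nonneg _) (Real.exp_nonneg _)
        · rw [hre]
          refine Real.exp_le_exp.2 ?_
          exact mul_le_mul_of_nonneg_right hzre (by linarith)
        · exact (norm_dslope_sin_le _).trans (Real.exp_le_exp.2 hnorm)
    _ = Real.exp (ρ * (4 * Real.pi + b + ε)) * Real.exp (-(b + ε) * n) := by
        rw [← Real.exp_add, ← Real.exp_add]
        congr 1
        ring

theorem interp_series_uniform_and_entire (ζ : ℕ → ℂ) (a b : ℝ) (hb : 0 < b)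
    (hζ : ∀ n : ℕ, ‖ζ n‖ < Real.exp (a + b * n)) (ε : ℝ) (hε : 0 < ε) :
    (∀ ρ : ℝ, 0 < ρ →
      TendstoUniformlyOn
        (fun (N : Finset ℕ) (z : ℂ) => ∑ n ∈ N, ζ n * fTerm b ε n z)
        (fun z : ℂ => ∑' n : ℕ, ζ n * fTerm b ε n z)
        Filter.atTop {z : ℂ | ‖z‖ < ρ}) ∧
    Differentiable ℂ (fun z : ℂ => ∑' n : ℕ, ζ n * fTerm b ε n z) := by
  -- Summable majorant for a given ρ
  have key : ∀ ρ : ℝ, Summable (fun n : ℕ =>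
      Real.exp (a + ρ * (4 * Real.pi + b + ε)) * Real.exp (-ε) ^ n) := by
    intro ρ
    exact (summable_geometric_of_lt_one (Real.exp_nonneg _)
      (Real.exp_lt_one_iff.2 (by linarith))).mul_left _
  have bound : ∀ ρ : ℝ, ∀ n : ℕ, ∀ z : ℂ, ‖z‖ ≤ ρ →
      ‖ζ n * fTerm b ε n z‖ ≤
        Real.exp (a + ρ * (4 * Real.pi + b + ε)) * Real.exp (-ε) ^ n := by
    intro ρ n z hz
    rw [norm_mul]
    calc ‖ζ n‖ * ‖fTerm b ε n z‖
        ≤ Real.exp (a + b * n) *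
            (Real.exp (ρ * (4 * Real.pi + b + ε)) * Real.exp (-(b + ε) * n)) := by
          exact mul_le_mul (le_of_lt (hζ n)) (fTerm_bound b ε hb hε n z ρ hz)
            (norm_nonneg _) (Real.exp_nonneg _)
      _ = Real.exp (a + ρ * (4 * Real.pi + b + ε)) * Real.exp (-ε) ^ n := by
          rw [← Real.exp_nat_mul, ← Real.exp_add, ← Real.exp_add, ← Real.exp_add]
          congr 1
          ring
  constructor
  · intro ρ hρ
    exact tendstoUniformlyOn_tsum (key ρ) fun n z hz => bound ρ n z (le_of_lt hz)
  · intro z₀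
    set ρ : ℝ := ‖z₀‖ + 1 with hρdef
    have hz₀ : z₀ ∈ Metric.ball (0 : ℂ) ρ := by
      rw [Metric.mem_ball]
      have hd : dist z₀ 0 = ‖z₀‖ := by simp
      rw [hd]; linarith
    have hdiff : DifferentiableOn ℂ (fun z : ℂ => ∑' n : ℕ, ζ n * fTerm b ε n z)
        (Metric.ball (0 : ℂ) ρ) := by
      refine differentiableOn_tsum_of_summable_norm (key ρ)
        (fun n => ((fTerm_differentiable b ε n).const_mul _).differentiableOn)
        Metric.isOpen_ball (fun n w hw => ?_)
      refine bound ρ n w ?_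
      have := Metric.mem_ball.1 hw
      rw [Complex.dist_eq, sub_zero] at this
      exact le_of_lt this
    exact (hdiff.differentiableAt (Metric.isOpen_ball.mem_nhds hz₀))
end

section
/- Let (ζ_n)_{n≥0} be a sequence of complex numbers satisfying |ζ_n| < exp(a + bn) for some a ∈ ℝ and b > 0. Then there exists an entire function s : ℂ → ℂ such that s(n) = ζ_n for every integer n ≥ 0. -/
open Complex Real Filter

noncomputable def gsin : ℂ → ℂ := fun z => Complex.sin ((Real.pi : ℂ) * z)

lemma gsin_diff : Differentiable ℂ gsin :=
  Complex.differentiable_sin.comp ((differentiable_const _).mul differentiable_id)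

lemma gsin_nat (n : ℕ) : gsin (n : ℂ) = 0 := by
  have := Complex.sin_nat_mul_pi n
  simpa [gsin, mul_comm] using this

lemma gsin_hasDerivAt (z : ℂ) :
    HasDerivAt gsin (Complex.cos ((Real.pi : ℂ) * z) * Real.pi) z := by
  have h1 : HasDerivAt (fun w : ℂ => (Real.pi : ℂ) * w) (Real.pi : ℂ) z := by
    simpa using (hasDerivAt_id z).const_mul (Real.pi : ℂ)
  exact (Complex.hasDerivAt_sin _).comp z h1

lemma gsin_deriv_nat (n : ℕ) : deriv gsin (n : ℂ) = (Real.pi : ℂ) * (-1) ^ n := by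
  rw [(gsin_hasDerivAt (n : ℂ)).deriv]
  have hr : Real.cos ((n : ℝ) * Real.pi) = (-1) ^ n := by
    simpa using Real.cos_nat_mul_pi_sub 0 n
  have : Complex.cos ((Real.pi : ℂ) * n) = ((-1 : ℝ) ^ n : ℝ) := by
    rw [mul_comm]
    rw [show ((n : ℂ) * (Real.pi : ℂ)) = (((n : ℝ) * Real.pi : ℝ) : ℂ) by push_cast; ring]
    rw [← Complex.ofReal_cos, hr]
  rw [this]
  push_cast
  ring

lemma dslope_gsin_diff (w : ℂ) : Differentiable ℂ (dslope gsin w) := by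
  intro z
  rcases eq_or_ne z w with rfl | h
  · obtain ⟨p, hp⟩ := gsin_diff.analyticAt z
    exact hp.has_fpower_series_dslope_fslope.differentiableAt
  · exact (differentiableAt_dslope_of_ne h).mpr (gsin_diff z)

lemma norm_sin_le (w : ℂ) : ‖Complex.sin w‖ ≤ Real.exp ‖w‖ := by
  rw [Complex.sin]
  have h1 : ‖Complex.exp (-w * I) - Complex.exp (w * I)‖ ≤
      Real.exp ‖w‖ + Real.exp ‖w‖ := by
    refine (norm_sub_le _ _).trans (add_le_add ?_ ?_)
    · rw [Complex.norm_exp]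
      apply Real.exp_le_exp.2
      simp only [neg_mul, neg_re, Complex.mul_I_re]
      calc -(-w.im) = w.im := by ring
        _ ≤ |w.im| := le_abs_self _
        _ ≤ ‖w‖ := Complex.abs_im_le_norm w
    · rw [Complex.norm_exp]
      apply Real.exp_le_exp.2
      simp only [Complex.mul_I_re]
      calc -w.im ≤ |w.im| := neg_le_abs _
        _ ≤ ‖w‖ := Complex.abs_im_le_norm w
  calc ‖(Complex.exp (-w * I) - Complex.exp (w * I)) * I / 2‖
      = ‖Complex.exp (-w * I) - Complex.exp (w * I)‖ / 2 := by
        simp [norm_div, norm_mul]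
    _ ≤ (Real.exp ‖w‖ + Real.exp ‖w‖) / 2 := by linarith
    _ = Real.exp ‖w‖ := by ring

theorem exists_entire_interpolant (ζ : ℕ → ℂ) (a b : ℝ) (hb : 0 < b)
    (hζ : ∀ n : ℕ, ‖ζ n‖ < Real.exp (a + b * n)) :
    ∃ s : ℂ → ℂ, Differentiable ℂ s ∧ ∀ n : ℕ, s (n : ℂ) = ζ n := by
  set c : ℝ := b + 1 with hc
  set F : ℕ → ℂ → ℂ := fun n z =>
    (ζ n * (-1) ^ n / (Real.pi : ℂ)) *
      (Complex.exp ((c : ℂ) * (z - n)) * dslope gsin (n : ℂ) z) with hF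
  have hπ0 : (Real.pi : ℂ) ≠ 0 := Complex.ofReal_ne_zero.mpr Real.pi_ne_zero
  have hFdiff : ∀ n, Differentiable ℂ (F n) := by
    intro n
    apply Differentiable.const_mul
    exact (Complex.differentiable_exp.comp
      ((differentiable_const _).mul (differentiable_id.sub_const _))).mul
      (dslope_gsin_diff _)
  have hFzero : ∀ m n : ℕ, n ≠ m → F n (m : ℂ) = 0 := by
    intro m n hnm
    have hne : (m : ℂ) ≠ (n : ℂ) := by
      exact_mod_cast fun h => hnm (Nat.cast_injective h).symm
    rw [hF]
    simp only
    rw [dslope_of_ne _ hne, slope_def_field, gsin_nat, gsin_nat]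
    simp
  have hFdiag : ∀ n : ℕ, F n (n : ℂ) = ζ n := by
    intro n
    rw [hF]
    simp only
    rw [dslope_same, gsin_deriv_nat]
    rw [sub_self, mul_zero, Complex.exp_zero, one_mul]
    field_simp
    have hsq : ((-1 : ℂ)) ^ n * ((-1 : ℂ)) ^ n = 1 := by
      rw [← mul_pow]; norm_num
    linear_combination ζ n * hsq
  refine ⟨fun z => ∑' n, F n z, ?_, ?_⟩
  · intro z₀
    set R : ℝ := ‖z₀‖ + 1 with hR
    have hR0 : 0 < R := by positivity
    set u : ℕ → ℝ := fun n => Real.exp (a + (b + 1 + Real.pi) * R - n) with hu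
    have hsum : Summable u := by
      have : u = fun n => Real.exp (a + (b + 1 + Real.pi) * R) * Real.exp (-1) ^ n := by
        funext n
        rw [hu, ← Real.exp_nat_mul, ← Real.exp_add]
        ring_nf
      rw [this]
      exact (summable_geometric_of_lt_one (Real.exp_nonneg _)
        (Real.exp_lt_one_iff.mpr (by norm_num))).mul_left _
    have hbound : ∀ᶠ n in cofinite, ∀ z ∈ Metric.ball (0 : ℂ) R, ‖F n z‖ ≤ u n := by
      rw [Nat.cofinite_eq_atTop]
      filter_upwards [eventually_ge_atTop (⌈R⌉₊ + 1)] with n hn z hz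
      have hzR : ‖z‖ < R := by simpa using hz
      have hnR : R + 1 ≤ (n : ℝ) := by
        have h1 : R ≤ ⌈R⌉₊ := Nat.le_ceil R
        have h2 : ((⌈R⌉₊ + 1 : ℕ) : ℝ) ≤ (n : ℝ) := by exact_mod_cast hn
        push_cast at h2
        linarith
      have hzn : z ≠ (n : ℂ) := by
        intro h
        rw [h] at hzR
        simp only [Complex.norm_natCast] at hzR
        linarith
      have hdist : 1 ≤ ‖z - (n : ℂ)‖ := by
        have : ‖(n : ℂ)‖ - ‖z‖ ≤ ‖z - (n : ℂ)‖ := by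
          have := norm_sub_norm_le ((n : ℂ)) z
          rwa [norm_sub_rev] at this
        simp only [Complex.norm_natCast] at this
        linarith
      have hA : ‖ζ n * (-1) ^ n / (Real.pi : ℂ)‖ ≤ Real.exp (a + b * n) := by
        rw [norm_div, norm_mul]
        simp only [norm_pow, norm_neg, norm_one, one_pow, mul_one]
        rw [Complex.norm_real, Real.norm_eq_abs, abs_of_pos Real.pi_pos]
        have hπ1 : 1 ≤ Real.pi := by linarith [Real.pi_gt_three]
        calc ‖ζ n‖ / Real.pi ≤ ‖ζ n‖ / 1 := by
              apply div_le_div_of_nonneg_left (norm_nonneg _) one_pos hπ1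
          _ = ‖ζ n‖ := div_one _
          _ ≤ Real.exp (a + b * n) := (hζ n).le
      have hB : ‖Complex.exp ((c : ℂ) * (z - n))‖ ≤ Real.exp (c * (R - n)) := by
        rw [Complex.norm_exp]
        apply Real.exp_le_exp.2
        have : ((c : ℂ) * (z - n)).re = c * (z.re - n) := by
          simp [Complex.mul_re]
        rw [this]
        have hre : z.re ≤ R := by
          calc z.re ≤ |z.re| := le_abs_self _
            _ ≤ ‖z‖ := Complex.abs_re_le_norm z
            _ ≤ R := hzR.le
        have hcpos : 0 < c := by rw [hc]; linarith
        nlinarith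
      have hC : ‖dslope gsin (n : ℂ) z‖ ≤ Real.exp (Real.pi * R) := by
        rw [dslope_of_ne _ hzn, slope_def_field, gsin_nat, sub_zero, norm_div]
        calc ‖gsin z‖ / ‖z - (n : ℂ)‖ ≤ ‖gsin z‖ / 1 := by
              apply div_le_div_of_nonneg_left (norm_nonneg _) one_pos hdist
          _ = ‖gsin z‖ := div_one _
          _ ≤ Real.exp ‖(Real.pi : ℂ) * z‖ := norm_sin_le _
          _ ≤ Real.exp (Real.pi * R) := by
              apply Real.exp_le_exp.2
              rw [norm_mul, Complex.norm_real, Real.norm_eq_abs,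
                abs_of_pos Real.pi_pos]
              nlinarith [Real.pi_pos, norm_nonneg z]
      calc ‖F n z‖ = ‖ζ n * (-1) ^ n / (Real.pi : ℂ)‖ *
            (‖Complex.exp ((c : ℂ) * (z - n))‖ * ‖dslope gsin (n : ℂ) z‖) := by
            rw [hF]; simp [norm_mul]
        _ ≤ Real.exp (a + b * n) * (Real.exp (c * (R - n)) * Real.exp (Real.pi * R)) := by
            refine mul_le_mul hA ?_ (by positivity) (Real.exp_nonneg _)
            exact mul_le_mul hB hC (norm_nonneg _) (Real.exp_nonneg _)
        _ = u n := by
            rw [hu, ← Real.exp_add, ← Real.exp_add]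
            congr 1
            rw [hc]
            ring
    have hloc := (tendstoUniformlyOn_tsum_of_cofinite_eventually hsum
      hbound).tendstoLocallyUniformlyOn
    have hdo : DifferentiableOn ℂ (fun z => ∑' n, F n z) (Metric.ball (0 : ℂ) R) := by
      refine hloc.differentiableOn ?_ Metric.isOpen_ball
      filter_upwards with t
      exact (DifferentiableOn.fun_sum fun i _ => ((hFdiff i).differentiableOn))
    have hz₀ : z₀ ∈ Metric.ball (0 : ℂ) R := by
      simp only [Metric.mem_ball, dist_zero_right]
      linarith
    exact hdo.differentiableAt (Metric.isOpen_ball.mem_nhds hz₀)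
  · intro m
    show (∑' n, F n (m : ℂ)) = ζ m
    rw [tsum_eq_single m (fun n hn => hFzero m n hn)]
    exact hFdiag m
end

section
/- If a real sequence (E_n)_{n≥0} satisfies |E_n| ≤ exp(a + bn) for some a, b > 0, then there exists an entire function s : ℂ → ℂ that is real-valued on the non-negative integers with s(n) = E_n for all n ≥ 0. -/
open Complex

noncomputable def mySinc : ℂ → ℂ := dslope Complex.sin 0

lemma mySinc_zero : mySinc 0 = 1 := by
  simp [mySinc, dslope_same, Complex.deriv_sin]

lemma mySinc_of_ne {z : ℂ} (hz : z ≠ 0) : mySinc z = Complex.sin z / z := by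
  rw [mySinc, dslope_of_ne _ hz, slope_def_field]
  simp

lemma differentiable_mySinc : Differentiable ℂ mySinc := by
  intro z
  rcases eq_or_ne z 0 with rfl | hz
  · have h : AnalyticAt ℂ Complex.sin 0 :=
      Complex.differentiable_sin.differentiableOn.analyticAt
        (Filter.univ_mem' fun _ => trivial)
    obtain ⟨p, hp⟩ := h
    exact hp.has_fpower_series_dslope_fslope.analyticAt.differentiableAt
  · rw [mySinc]
    exact (differentiableAt_dslope_of_ne hz).2 (Complex.differentiable_sin z)

lemma norm_sin_le_exp (z : ℂ) : ‖Complex.sin z‖ ≤ Real.exp ‖z‖ := by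
  rw [Complex.sin]
  have h1 : ‖Complex.exp (-z * I)‖ ≤ Real.exp ‖z‖ := by
    rw [Complex.norm_exp]
    apply Real.exp_le_exp.2
    have : (-z * I).re = z.im := by simp
    rw [this]
    exact (le_abs_self _).trans (Complex.abs_im_le_norm z)
  have h2 : ‖Complex.exp (z * I)‖ ≤ Real.exp ‖z‖ := by
    rw [Complex.norm_exp]
    apply Real.exp_le_exp.2
    have : (z * I).re = -z.im := by simp
    rw [this]
    exact (neg_le_abs _).trans (Complex.abs_im_le_norm z)
  calc ‖(Complex.exp (-z * I) - Complex.exp (z * I)) * I / 2‖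
      = ‖Complex.exp (-z * I) - Complex.exp (z * I)‖ / 2 := by
        rw [norm_div, norm_mul]; simp
    _ ≤ (‖Complex.exp (-z * I)‖ + ‖Complex.exp (z * I)‖) / 2 := by
        gcongr; exact norm_sub_le _ _
    _ ≤ (Real.exp ‖z‖ + Real.exp ‖z‖) / 2 := by gcongr
    _ = Real.exp ‖z‖ := by ring

/-- A global bound for `mySinc`. -/
lemma exists_mySinc_bound : ∃ C : ℝ, 0 < C ∧ ∀ z : ℂ, ‖mySinc z‖ ≤ C * Real.exp ‖z‖ := by
  obtain ⟨C₀, hC₀⟩ := (isCompact_closedBall (0 : ℂ) 1).exists_bound_of_continuousOn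
    differentiable_mySinc.continuous.continuousOn
  refine ⟨max C₀ 1, lt_of_lt_of_le one_pos (le_max_right _ _), fun z => ?_⟩
  rcases le_or_gt ‖z‖ 1 with h | h
  · calc ‖mySinc z‖ ≤ C₀ := hC₀ z (by simpa [Metric.mem_closedBall] using h)
      _ ≤ max C₀ 1 := le_max_left _ _
      _ ≤ max C₀ 1 * Real.exp ‖z‖ := by
          nlinarith [Real.one_le_exp (norm_nonneg z), le_max_right C₀ 1]
  · have hz : z ≠ 0 := by intro h0; rw [h0, norm_zero] at h; linarith
    rw [mySinc_of_ne hz, norm_div]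
    calc ‖Complex.sin z‖ / ‖z‖ ≤ ‖Complex.sin z‖ := div_le_self (norm_nonneg _) h.le
      _ ≤ Real.exp ‖z‖ := norm_sin_le_exp z
      _ ≤ max C₀ 1 * Real.exp ‖z‖ := by
          nlinarith [Real.exp_pos ‖z‖, le_max_right C₀ 1]

set_option maxHeartbeats 1000000 in
theorem exists_entire_interpolant_real (E : ℕ → ℝ) (a b : ℝ) (ha : 0 < a) (hb : 0 < b)
    (hE : ∀ n : ℕ, |E n| ≤ Real.exp (a + b * n)) :
    ∃ s : ℂ → ℂ, Differentiable ℂ s ∧ ∀ n : ℕ, s (n : ℂ) = (E n : ℂ) := by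
  obtain ⟨C, hC, hCle⟩ := exists_mySinc_bound
  set π := Real.pi with hπ
  -- the interpolating series
  set F : ℕ → ℂ → ℂ := fun n z =>
    (E n : ℂ) * Complex.exp (-(z - n) ^ 2) * mySinc ((π : ℂ) * (z - n)) with hF
  have hFdiff : ∀ n, Differentiable ℂ (F n) := by
    intro n
    apply Differentiable.mul
    · exact (differentiable_const _).mul
        (Complex.differentiable_exp.comp (((differentiable_id.sub_const _).pow 2).neg))
    · exact differentiable_mySinc.comp ((differentiable_id.sub_const _).const_mul _)
  refine ⟨fun z => ∑' n, F n z, ?_, ?_⟩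
  · -- differentiability
    intro z₀
    set R : ℝ := ‖z₀‖ + 1 with hR
    have hR0 : 0 < R := by positivity
    set c : ℝ := b + 2 * R + π with hc
    have hπ0 : 0 < π := Real.pi_pos
    have hc0 : 0 < c := by positivity
    set A : ℝ := C * Real.exp (a + R ^ 2 + π * R) * Real.exp ((c + 1) ^ 2) with hA
    have hA0 : 0 < A := by positivity
    -- summable bound
    have hsum : Summable (fun n : ℕ => A * Real.exp (-(n : ℝ))) := by
      apply Summable.mul_left
      have : (fun n : ℕ => Real.exp (-(n : ℝ))) = fun n : ℕ => Real.exp (-1) ^ n := by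
        funext n
        rw [← Real.exp_nat_mul]
        ring_nf
      rw [this]
      exact summable_geometric_of_lt_one (Real.exp_pos _).le
        (Real.exp_lt_one_iff.2 (by norm_num))
    have key : DifferentiableOn ℂ (fun w => ∑' n, F n w) (Metric.ball (0 : ℂ) R) := by
      apply differentiableOn_tsum_of_summable_norm hsum
        (fun n => (hFdiff n).differentiableOn) Metric.isOpen_ball
      intro n w hw
      have hwR : ‖w‖ < R := by simpa [Metric.mem_ball] using hw
      have hre : |w.re| ≤ R := (Complex.abs_re_le_norm w).trans hwR.le
      have him : |w.im| ≤ R := (Complex.abs_im_le_norm w).trans hwR.le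
      -- bound each factor
      have h1 : ‖(E n : ℂ)‖ ≤ Real.exp (a + b * n) := by
        rw [Complex.norm_real, Real.norm_eq_abs]; exact hE n
      have h2 : ‖Complex.exp (-(w - n) ^ 2)‖ ≤ Real.exp (2 * R * n - (n : ℝ) ^ 2 + R ^ 2) := by
        rw [Complex.norm_exp]
        apply Real.exp_le_exp.2
        have hre' : (-(w - n) ^ 2).re = (w.im) ^ 2 - (w.re - n) ^ 2 := by
          simp [Complex.sub_re, Complex.sub_im, sq]
        rw [hre']
        have hn0 : (0 : ℝ) ≤ n := Nat.cast_nonneg n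
        nlinarith [sq_nonneg w.re, abs_le.1 hre, abs_le.1 him, _root_.sq_abs w.im, sq_nonneg (|w.im| - R)]
      have h3 : ‖mySinc ((π : ℂ) * (w - n))‖ ≤ C * Real.exp (π * (R + n)) := by
        refine (hCle _).trans ?_
        have : ‖(π : ℂ) * (w - n)‖ ≤ π * (R + n) := by
          rw [norm_mul, Complex.norm_real, Real.norm_eq_abs, abs_of_pos hπ0]
          have : ‖w - (n : ℂ)‖ ≤ R + n := by
            calc ‖w - (n : ℂ)‖ ≤ ‖w‖ + ‖(n : ℂ)‖ := norm_sub_le _ _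
              _ ≤ R + n := by
                  have : ‖(n : ℂ)‖ = (n : ℝ) := by
                    simp
                  rw [this]; exact add_le_add hwR.le le_rfl
          nlinarith
        nlinarith [Real.exp_le_exp.2 this, Real.exp_pos ‖(π : ℂ) * (w - n)‖]
      calc ‖F n w‖ = ‖(E n : ℂ)‖ * ‖Complex.exp (-(w - n) ^ 2)‖ * ‖mySinc ((π : ℂ) * (w - n))‖ := by
            rw [hF]; simp [norm_mul]
        _ ≤ Real.exp (a + b * n) * Real.exp (2 * R * n - (n : ℝ) ^ 2 + R ^ 2) *
              (C * Real.exp (π * (R + n))) :=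
            mul_le_mul (mul_le_mul h1 h2 (norm_nonneg _) (Real.exp_pos _).le) h3
              (norm_nonneg _) (by positivity)
        _ = C * (Real.exp (a + b * n) * Real.exp (2 * R * n - (n : ℝ) ^ 2 + R ^ 2) *
              Real.exp (π * (R + n))) := by ring
        _ = C * (Real.exp ((a + b * n) + (2 * R * n - (n : ℝ) ^ 2 + R ^ 2) + π * (R + n))) := by
            rw [← Real.exp_add, ← Real.exp_add]
        _ ≤ C * Real.exp ((a + R ^ 2 + π * R) + ((c + 1) ^ 2 + -(n : ℝ))) := by
            apply mul_le_mul_of_nonneg_left _ hC.le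
            apply Real.exp_le_exp.2
            have hn0 : (0 : ℝ) ≤ n := Nat.cast_nonneg n
            have hkey : c * n - (n : ℝ) ^ 2 ≤ (c + 1) ^ 2 - n := by
              nlinarith [sq_nonneg ((n : ℝ) - (c + 1))]
            have heq : (a + b * n) + (2 * R * n - (n : ℝ) ^ 2 + R ^ 2) + π * (R + n)
                = (a + R ^ 2 + π * R) + (c * n - (n : ℝ) ^ 2) := by
              rw [hc]; ring
            rw [heq]
            linarith
        _ = A * Real.exp (-(n : ℝ)) := by
            rw [hA, mul_assoc, mul_assoc, ← Real.exp_add, ← Real.exp_add]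
    have hz₀ : z₀ ∈ Metric.ball (0 : ℂ) R := by
      rw [mem_ball_zero_iff, hR]
      linarith
    exact key.differentiableAt (Metric.isOpen_ball.mem_nhds hz₀)
  · -- interpolation property
    intro m
    have : ∀ n : ℕ, n ≠ m → F n (m : ℂ) = 0 := by
      intro n hn
      have hz : ((m : ℂ) - n) ≠ 0 := by
        intro h
        apply hn
        have h2 : (n : ℂ) = m := by linear_combination -h
        exact_mod_cast h2
      have harg : (π : ℂ) * ((m : ℂ) - n) ≠ 0 := by
        apply mul_ne_zero _ hz
        exact_mod_cast Real.pi_ne_zero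
      have hsin : Complex.sin ((π : ℂ) * ((m : ℂ) - n)) = 0 := by
        apply Complex.sin_eq_zero_iff.2
        refine ⟨(m : ℤ) - n, ?_⟩
        push_cast
        ring
      rw [hF]
      simp only
      rw [mySinc_of_ne harg, hsin]
      simp
    show (∑' n, F n (m : ℂ)) = (E m : ℂ)
    rw [tsum_eq_single m (fun n hn => this n hn)]
    rw [hF]
    simp [mySinc_zero]
end
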